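/- Let w : U → ℂ be holomorphic with w(0) = 0 and |w(z)| < 1 for all z ∈ U, let a_k denote the k-th Taylor coefficient of w at 0, and set a = (a_1,…,a_n) ∈ ℂ^n. Then for all u_1, u_2 ∈ ℝ, all λ ∈ ℝ, and every k with 1 ≤ k ≤ n, the k-th Taylor coefficient at 0 of the function z ↦ −w(z)·[ λ(e^{iu_1}+w(z))/(e^{iu_1}−w(z)) + (1−λ)(e^{iu_2}+w(z))/(e^{iu_2}−w(z)) ] equals −a_k − 2∑_{s=1}^{k−1} (λe^{−isu_1} + (1−λ)e^{−isu_2})(A(a)^s a)_k. (Consequently, the first n Taylor coefficients of a solution of the two-slit Löwner–Kufarev equation satisfy the phase system ȧ = −a − 2∑_{s=1}^{n−1}(λe^{−isu_1(t)}+(1−λ)e^{−isu_2(t)}) A(a)^s a.) -/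

import Mathlib

open Complex Metric

/-- The `k`-th Taylor coefficient of `f` at `0`. -/
noncomputable def taylorCoeff (f : ℂ → ℂ) (k : ℕ) : ℂ :=
  iteratedDeriv k f 0 / Nat.factorial k

/-- The lower-triangular nilpotent Toeplitz matrix `A(a)` with `A(a)_{j,k} = a_{j-k}`
(1-indexed) for `j > k` and `0` otherwise. -/
noncomputable def toeplitzA {n : ℕ} (a : Fin n → ℂ) : Matrix (Fin n) (Fin n) ℂ :=
  Matrix.of fun j k =>
    if _ : (k : ℕ) < (j : ℕ) then a ⟨(j : ℕ) - (k : ℕ) - 1, by have := j.isLt; omega⟩ else 0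

/-- The Löwner kernel `p(ζ, u) = (e^{iu} + ζ)/(e^{iu} - ζ)`. -/
noncomputable def lkernel (ζ : ℂ) (u : ℝ) : ℂ :=
  (Complex.exp (u * Complex.I) + ζ) / (Complex.exp (u * Complex.I) - ζ)

namespace TwoSlitAux

/-- Local power-series representation at `0`. -/
def Rep (f : ℂ → ℂ) (c : ℕ → ℂ) : Prop :=
  ∀ᶠ z in nhds (0 : ℂ), HasSum (fun m => c m * z ^ m) (f z)

theorem rep_iff {f : ℂ → ℂ} {c : ℕ → ℂ} :
    Rep f c ↔ HasFPowerSeriesAt f (FormalMultilinearSeries.ofScalars ℂ c) 0 := by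
  rw [hasFPowerSeriesAt_iff]
  have hcoeff : ∀ m, (FormalMultilinearSeries.ofScalars ℂ c).coeff m = c m := by
    intro m
    show (FormalMultilinearSeries.ofScalars ℂ c m) (fun _ => 1) = c m
    rw [FormalMultilinearSeries.ofScalars_apply_eq]
    simp
  unfold Rep
  constructor <;> intro h <;> filter_upwards [h] with z hz
  · have : (fun m => (z : ℂ) ^ m • (FormalMultilinearSeries.ofScalars ℂ c).coeff m)
        = fun m => c m * z ^ m := by
      funext m; rw [hcoeff]; simp [smul_eq_mul]; ring
    rw [this, zero_add]; exact hz
  · have : (fun m => (z : ℂ) ^ m • (FormalMultilinearSeries.ofScalars ℂ c).coeff m)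
        = fun m => c m * z ^ m := by
      funext m; rw [hcoeff]; simp [smul_eq_mul]; ring
    rw [zero_add] at hz; rw [← this]; exact hz

theorem Rep.taylorCoeff_eq {f : ℂ → ℂ} {c : ℕ → ℂ} (h : Rep f c) (m : ℕ) :
    iteratedDeriv m f 0 = (Nat.factorial m : ℂ) * c m := by
  obtain ⟨r, hr⟩ := rep_iff.1 h
  have h1 := hr.factorial_smul (1 : ℂ) m
  rw [iteratedDeriv_eq_iteratedFDeriv, ← h1, FormalMultilinearSeries.ofScalars_apply_eq]
  simp [nsmul_eq_mul]

theorem rep_of_analyticAt {f : ℂ → ℂ} (h : AnalyticAt ℂ f 0) :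
    ∃ c : ℕ → ℂ, Rep f c := by
  obtain ⟨p, hp⟩ := h
  refine ⟨p.coeff, ?_⟩
  have h2 := hasFPowerSeriesAt_iff.1 hp
  filter_upwards [h2] with z hz
  rw [zero_add] at hz
  have he : (fun m => (z:ℂ) ^ m • p.coeff m) = fun m => p.coeff m * z ^ m := by
    funext m; rw [smul_eq_mul, mul_comm]
  rw [← he]; exact hz

theorem Rep.congr {f g : ℂ → ℂ} {c : ℕ → ℂ} (h : Rep g c)
    (hfg : ∀ᶠ z in nhds (0:ℂ), f z = g z) : Rep f c := by
  filter_upwards [h, hfg] with z h1 h2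
  rw [h2]; exact h1

theorem Rep.neg {f : ℂ → ℂ} {c : ℕ → ℂ} (h : Rep f c) :
    Rep (fun z => -(f z)) (fun m => -(c m)) := by
  filter_upwards [h] with z h1
  simpa [neg_mul] using h1.neg

theorem Rep.add {f g : ℂ → ℂ} {c d : ℕ → ℂ} (hf : Rep f c) (hg : Rep g d) :
    Rep (fun z => f z + g z) (fun m => c m + d m) := by
  filter_upwards [hf, hg] with z h1 h2
  simpa [add_mul] using h1.add h2

theorem Rep.sub {f g : ℂ → ℂ} {c d : ℕ → ℂ} (hf : Rep f c) (hg : Rep g d) :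
    Rep (fun z => f z - g z) (fun m => c m - d m) := by
  filter_upwards [hf, hg] with z h1 h2
  simpa [sub_mul] using h1.sub h2

theorem Rep.const_mul {f : ℂ → ℂ} {c : ℕ → ℂ} (h : Rep f c) (A : ℂ) :
    Rep (fun z => A * f z) (fun m => A * c m) := by
  filter_upwards [h] with z h1
  simpa [mul_assoc] using h1.mul_left A

theorem Rep.mul {f g : ℂ → ℂ} {c d : ℕ → ℂ} (hf : Rep f c) (hg : Rep g d) :
    Rep (fun z => f z * g z) (fun m => ∑ i ∈ Finset.range (m + 1), c i * d (m - i)) := by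
  filter_upwards [hf, hg] with z h1 h2
  have hc : Summable fun m => ‖c m * z ^ m‖ := summable_norm_iff.2 h1.summable
  have hd : Summable fun m => ‖d m * z ^ m‖ := summable_norm_iff.2 h2.summable
  have hsum : Summable fun m =>
      ∑ i ∈ Finset.range (m + 1), (c i * z ^ i) * (d (m - i) * z ^ (m - i)) :=
    (summable_norm_sum_mul_range_of_summable_norm hc hd).of_norm
  have heq : f z * g z
      = ∑' m, ∑ i ∈ Finset.range (m + 1), (c i * z ^ i) * (d (m - i) * z ^ (m - i)) := by
    rw [← h1.tsum_eq, ← h2.tsum_eq]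
    exact tsum_mul_tsum_eq_tsum_sum_range_of_summable_norm hc hd
  have hS := hsum.hasSum
  rw [← heq] at hS
  convert hS using 2 with m
  rw [Finset.sum_mul]
  refine Finset.sum_congr rfl fun i hi => ?_
  have hi' : i ≤ m := Nat.lt_succ_iff.1 (Finset.mem_range.1 hi)
  have hzz : z ^ i * z ^ (m - i) = z ^ m := by
    rw [← pow_add]; congr 1; omega
  linear_combination (-(c i * d (m - i))) * hzz

theorem rep_one : Rep (fun _ => (1 : ℂ)) (fun m => if m = 0 then 1 else 0) := by
  refine Filter.Eventually.of_forall fun z => ?_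
  have h : HasSum (fun m : ℕ => if m = 0 then (1 : ℂ) else 0) 1 := hasSum_ite_eq 0 1
  convert h using 1
  funext m
  split <;> simp [*]

/-- Cauchy product of coefficient sequences. -/
noncomputable def cauchy (c d : ℕ → ℂ) : ℕ → ℂ :=
  fun m => ∑ i ∈ Finset.range (m + 1), c i * d (m - i)

/-- Coefficients of powers. -/
noncomputable def powC (c : ℕ → ℂ) : ℕ → ℕ → ℂ
  | 0 => fun m => if m = 0 then 1 else 0
  | s + 1 => cauchy c (powC c s)

theorem Rep.pow {f : ℂ → ℂ} {c : ℕ → ℂ} (h : Rep f c) :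
    ∀ s : ℕ, Rep (fun z => (f z) ^ s) (powC c s) := by
  intro s
  induction s with
  | zero => simpa [powC] using rep_one
  | succ s ih =>
      have := h.mul ih
      have he : (fun z => f z * f z ^ s) = fun z => f z ^ (s + 1) := by
        funext z; rw [pow_succ, mul_comm]
      rw [he] at this
      exact this

theorem powC_vanish {c : ℕ → ℂ} (hc0 : c 0 = 0) :
    ∀ s m : ℕ, m < s → powC c s m = 0 := by
  intro s
  induction s with
  | zero => omega
  | succ s ih =>
      intro m hm
      show cauchy c (powC c s) m = 0
      unfold cauchy
      refine Finset.sum_eq_zero fun i hi => ?_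
      have hi' : i ≤ m := Nat.lt_succ_iff.1 (Finset.mem_range.1 hi)
      rcases Nat.eq_zero_or_pos i with h0 | h0
      · rw [h0, hc0, zero_mul]
      · rw [ih (m - i) (by omega), mul_zero]

theorem powC_one {c : ℕ → ℂ} : powC c 1 = c := by
  funext m
  show cauchy c (powC c 0) m = c m
  unfold cauchy powC
  rw [Finset.sum_eq_single m]
  · simp
  · intro i hi hne
    have hi' : i ≤ m := Nat.lt_succ_iff.1 (Finset.mem_range.1 hi)
    have : ¬ (m - i = 0) := by omega
    simp [this]
  · intro h; exact absurd (Finset.self_mem_range_succ m) h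

/-- The key combinatorial lemma: coefficients of `w^{s+1}` are given by `A(a)^s a`. -/
theorem powC_toeplitz {n : ℕ} (a : Fin n → ℂ) (c : ℕ → ℂ) (hc0 : c 0 = 0)
    (hca : ∀ k : Fin n, c (k.1 + 1) = a k) :
    ∀ s : ℕ, ∀ k : Fin n, powC c (s + 1) (k.1 + 1) = ((toeplitzA a ^ s).mulVec a) k := by
  intro s
  induction s with
  | zero =>
      intro k
      rw [powC_one, pow_zero, Matrix.one_mulVec]
      exact hca k
  | succ s ih =>
      intro k
      have hRHS : ((toeplitzA a ^ (s + 1)).mulVec a) k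
          = ∑ j : Fin n, (toeplitzA a) k j * powC c (s + 1) (j.1 + 1) := by
        rw [pow_succ', ← Matrix.mulVec_mulVec]
        rw [Matrix.mulVec, dotProduct]
        exact Finset.sum_congr rfl fun j _ => by rw [ih j]
      rw [hRHS]
      -- rewrite the right side as a sum over `range k.1`
      have hterm : ∀ j : Fin n, (toeplitzA a) k j * powC c (s + 1) (j.1 + 1)
          = (fun t : ℕ => if t < k.1 then c (k.1 - t) * powC c (s + 1) (t + 1) else 0) j.1 := by
        intro j
        simp only [toeplitzA, Matrix.of_apply]
        by_cases hj : (j : ℕ) < (k : ℕ)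
        · rw [dif_pos hj, if_pos hj]
          congr 1
          rw [← hca ⟨(k : ℕ) - (j : ℕ) - 1, by have := k.isLt; omega⟩]
          show c (((k : ℕ) - (j : ℕ) - 1) + 1) = c ((k : ℕ) - (j : ℕ))
          congr 1
          omega
        · rw [dif_neg hj, if_neg hj, zero_mul]
      have hfin : ∑ j : Fin n, (toeplitzA a) k j * powC c (s + 1) (j.1 + 1)
          = ∑ t ∈ Finset.range n,
              (if t < k.1 then c (k.1 - t) * powC c (s + 1) (t + 1) else 0) := by
        rw [← Fin.sum_univ_eq_sum_range]
        exact Finset.sum_congr rfl fun j _ => hterm j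
      rw [hfin]
      have hsubset : ∑ t ∈ Finset.range n,
            (if t < k.1 then c (k.1 - t) * powC c (s + 1) (t + 1) else 0)
          = ∑ t ∈ Finset.range k.1, c (k.1 - t) * powC c (s + 1) (t + 1) := by
        rw [← Finset.sum_subset (Finset.range_subset_range.2 (le_of_lt k.isLt))
          (fun x _ hx => if_neg (fun hlt => hx (Finset.mem_range.2 hlt)))]
        exact Finset.sum_congr rfl fun t ht => if_pos (Finset.mem_range.1 ht)
      rw [hsubset]
      -- now the left side
      show cauchy c (powC c (s + 1)) (k.1 + 1) = _
      unfold cauchy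
      rw [Finset.sum_range_succ', hc0, zero_mul, add_zero]
      simp only [Nat.succ_sub_succ]
      rw [Finset.sum_range_succ, Nat.sub_self,
        powC_vanish hc0 (s + 1) 0 (Nat.succ_pos s), mul_zero, add_zero]
      rw [← Finset.sum_range_reflect]
      refine Finset.sum_congr rfl fun t ht => ?_
      have ht' : t < k.1 := Finset.mem_range.1 ht
      have h1 : k.1 - 1 - t + 1 = k.1 - t := by omega
      have h2 : k.1 - (k.1 - 1 - t) = t + 1 := by omega
      rw [h1, h2]

theorem geom_aux (K : ℕ) {q : ℂ} (hq : q ≠ 1) :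
    (1 + q) / (1 - q) = 1 + 2 * ∑ s ∈ Finset.Icc 1 K, q ^ s + 2 * q ^ (K + 1) / (1 - q) := by
  have h1 : (1 : ℂ) - q ≠ 0 := sub_ne_zero.2 fun h => hq h.symm
  have hsum : ∑ s ∈ Finset.Icc 1 K, q ^ s = q * ∑ i ∈ Finset.range K, q ^ i := by
    rw [← Finset.Ico_add_one_right_eq_Icc, Finset.sum_Ico_eq_sum_range, Finset.mul_sum]
    refine Finset.sum_congr (by norm_num) fun i _ => ?_
    rw [pow_add, pow_one]
  rw [hsum]
  have hg := geom_sum_mul q K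
  have key : (1 + q) / (1 - q) - 2 * q ^ (K + 1) / (1 - q)
      = 1 + 2 * (q * ∑ i ∈ Finset.range K, q ^ i) := by
    rw [div_sub_div_same]
    rw [div_eq_iff h1]
    linear_combination (2 * q) * hg
  linear_combination key

theorem kernel_expand (K : ℕ) (u : ℝ) {ζ : ℂ} (hζ : ‖ζ‖ < 1) :
    -ζ * lkernel ζ u = -ζ - 2 * ∑ s ∈ Finset.Icc 1 K,
        Complex.exp (-(s : ℂ) * (u : ℂ) * Complex.I) * ζ ^ (s + 1)
      - 2 * ζ ^ (K + 2) * (Complex.exp (-((K : ℂ) + 1) * (u : ℂ) * Complex.I)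
          / (1 - Complex.exp (-(u : ℂ) * Complex.I) * ζ)) := by
  set e := Complex.exp ((u : ℂ) * Complex.I) with he_def
  have he : e ≠ 0 := Complex.exp_ne_zero _
  have habs : ‖e‖ = 1 := Complex.norm_exp_ofReal_mul_I u
  set e' := Complex.exp (-(u : ℂ) * Complex.I) with he'_def
  have he'e : e' = e⁻¹ := by
    rw [he'_def, he_def, ← Complex.exp_neg]
    congr 1; ring
  set q := e' * ζ with hq_def
  have habsq : ‖q‖ < 1 := by
    rw [hq_def, norm_mul, he'e, norm_inv, habs, inv_one, one_mul]
    exact hζ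
  have hq1 : q ≠ 1 := by
    intro h; rw [h] at habsq; simp at habsq
  have h1q : (1 : ℂ) - q ≠ 0 := sub_ne_zero.2 fun h => hq1 h.symm
  have hden : e - ζ ≠ 0 := by
    refine sub_ne_zero.2 fun h => ?_
    rw [← h, habs] at hζ
    exact lt_irrefl 1 hζ
  have h2 : e * (1 + q) = e + ζ := by
    rw [hq_def, he'e]; field_simp
  have h3 : e * (1 - q) = e - ζ := by
    rw [hq_def, he'e]; field_simp
  have hfrac : lkernel ζ u = (1 + q) / (1 - q) := by
    unfold lkernel
    rw [← he_def, ← h2, ← h3, mul_div_mul_left _ _ he]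
  rw [hfrac, geom_aux K hq1]
  have hterm : ∀ s ∈ Finset.Icc 1 K,
      Complex.exp (-(s : ℂ) * (u : ℂ) * Complex.I) * ζ ^ (s + 1) = ζ * q ^ s := by
    intro s _
    have : Complex.exp (-(s : ℂ) * (u : ℂ) * Complex.I) = e' ^ s := by
      rw [he'_def, ← Complex.exp_nat_mul]
      congr 1; ring
    rw [this, hq_def, mul_pow, pow_succ]
    ring
  have hsums : ∑ s ∈ Finset.Icc 1 K, Complex.exp (-(s : ℂ) * (u : ℂ) * Complex.I) * ζ ^ (s + 1)
      = ζ * ∑ s ∈ Finset.Icc 1 K, q ^ s := by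
    rw [Finset.mul_sum]
    exact Finset.sum_congr rfl fun s hs => (hterm s hs)
  have hE : Complex.exp (-((K : ℂ) + 1) * (u : ℂ) * Complex.I) = e' ^ (K + 1) := by
    rw [he'_def, ← Complex.exp_nat_mul]
    congr 1; push_cast; ring
  rw [hsums, hE]
  have hf : ζ ^ (K + 2) * e' ^ (K + 1) = ζ * q ^ (K + 1) := by
    rw [hq_def, mul_pow]; ring
  have hq2 : (1 : ℂ) - e' * ζ = 1 - q := by rw [hq_def]
  rw [hq2]
  field_simp
  linear_combination (2 : ℂ) * hf

theorem rep_zero : Rep (fun _ => (0 : ℂ)) (fun _ => 0) :=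
  Filter.Eventually.of_forall fun z => by simpa using (hasSum_zero : HasSum (fun _ : ℕ => (0:ℂ)) 0)

theorem Rep.finsetSum {ι : Type*} (S : Finset ι) (f : ι → ℂ → ℂ) (cs : ι → ℕ → ℂ)
    (h : ∀ i ∈ S, Rep (f i) (cs i)) :
    Rep (fun z => ∑ i ∈ S, f i z) (fun m => ∑ i ∈ S, cs i m) := by
  classical
  induction S using Finset.induction_on with
  | empty => simpa using rep_zero
  | insert _ _ hnotmem ih =>
      rename_i i S
      simp only [Finset.sum_insert hnotmem]
      exact (h i (Finset.mem_insert_self i S)).add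
        (ih fun j hj => h j (Finset.mem_insert_of_mem hj))

theorem Rep.taylorCoeff_eq' {f : ℂ → ℂ} {c : ℕ → ℂ} (h : Rep f c) (m : ℕ) :
    taylorCoeff f m = c m := by
  unfold taylorCoeff
  rw [h.taylorCoeff_eq m, mul_div_cancel_left₀]
  exact Nat.cast_ne_zero.2 (Nat.factorial_ne_zero m)

end TwoSlitAux

open TwoSlitAux in
/-- two-slit version of the phase system: the `k`-th Taylor coefficient of
`-w·[λ p(w,u₁) + (1-λ) p(w,u₂)]` equals
`-a_k - 2∑_{s=1}^{k-1} (λe^{-isu₁} + (1-λ)e^{-isu₂})(A(a)^s a)_k`. -/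
theorem taylorCoeff_two_slit_rhs
    (n : ℕ) (w : ℂ → ℂ)
    (hw : DifferentiableOn ℂ w (ball (0 : ℂ) 1)) (hw0 : w 0 = 0)
    (hbd : ∀ z ∈ ball (0 : ℂ) 1, ‖w z‖ < 1)
    (a : Fin n → ℂ) (ha : ∀ k : Fin n, a k = taylorCoeff w (k.1 + 1)) :
    ∀ u₁ u₂ : ℝ, ∀ lam : ℝ, ∀ k : Fin n,
      taylorCoeff (fun z => -(w z) *
          ((lam : ℂ) * lkernel (w z) u₁ + (1 - (lam : ℂ)) * lkernel (w z) u₂)) (k.1 + 1)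
        = -(a k) - 2 * ∑ s ∈ Finset.Icc 1 (k.1 : ℕ),
            ((lam : ℂ) * Complex.exp (-(s : ℂ) * (u₁ : ℂ) * Complex.I) +
             (1 - (lam : ℂ)) * Complex.exp (-(s : ℂ) * (u₂ : ℂ) * Complex.I)) *
              ((toeplitzA a ^ s).mulVec a) k := by
  intro u₁ u₂ lam k
  have hball : (0 : ℂ) ∈ ball (0 : ℂ) 1 := mem_ball_self one_pos
  have hA : AnalyticAt ℂ w 0 := hw.analyticAt (isOpen_ball.mem_nhds hball)
  obtain ⟨c, hc⟩ := rep_of_analyticAt hA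
  have hct : ∀ m, taylorCoeff w m = c m := hc.taylorCoeff_eq'
  have hc0 : c 0 = 0 := by
    rw [← hct 0]
    unfold taylorCoeff
    simp [hw0]
  have hca : ∀ j : Fin n, c (j.1 + 1) = a j := fun j => by rw [ha j, hct]
  set K := (k.1 : ℕ) with hK
  -- the coefficient weights
  set co : ℕ → ℂ := fun s => (lam : ℂ) * Complex.exp (-(s : ℂ) * (u₁ : ℂ) * Complex.I) +
      (1 - (lam : ℂ)) * Complex.exp (-(s : ℂ) * (u₂ : ℂ) * Complex.I) with hco
  -- the analytic remainder factor
  set H : ℂ → ℂ := fun z =>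
      (lam : ℂ) * (Complex.exp (-((K : ℂ) + 1) * (u₁ : ℂ) * Complex.I) /
        (1 - Complex.exp (-(u₁ : ℂ) * Complex.I) * w z)) +
      (1 - (lam : ℂ)) * (Complex.exp (-((K : ℂ) + 1) * (u₂ : ℂ) * Complex.I) /
        (1 - Complex.exp (-(u₂ : ℂ) * Complex.I) * w z)) with hH
  have hHa : AnalyticAt ℂ H 0 := by
    apply AnalyticAt.add
    · exact analyticAt_const.mul (analyticAt_const.div
        (analyticAt_const.sub (analyticAt_const.mul hA)) (by simp [hw0]))
    · exact analyticAt_const.mul (analyticAt_const.div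
        (analyticAt_const.sub (analyticAt_const.mul hA)) (by simp [hw0]))
  obtain ⟨d, hd⟩ := rep_of_analyticAt hHa
  -- representation of the target function
  have hsumrep : Rep (fun z => ∑ s ∈ Finset.Icc 1 K, co s * (w z) ^ (s + 1))
      (fun m => ∑ s ∈ Finset.Icc 1 K, co s * powC c (s + 1) m) :=
    Rep.finsetSum _ _ _ fun s _ => (hc.pow (s + 1)).const_mul (co s)
  have hmulrep : Rep (fun z => (w z) ^ (K + 2) * H z)
      (fun m => ∑ i ∈ Finset.range (m + 1), powC c (K + 2) i * d (m - i)) :=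
    (hc.pow (K + 2)).mul hd
  have hGrep : Rep (fun z => -(w z) - 2 * ∑ s ∈ Finset.Icc 1 K, co s * (w z) ^ (s + 1)
        - 2 * ((w z) ^ (K + 2) * H z))
      (fun m => -(c m) - 2 * ∑ s ∈ Finset.Icc 1 K, co s * powC c (s + 1) m
        - 2 * ∑ i ∈ Finset.range (m + 1), powC c (K + 2) i * d (m - i)) :=
    (hc.neg.sub (hsumrep.const_mul 2)).sub (hmulrep.const_mul 2)
  have hFrep : Rep (fun z => -(w z) *
      ((lam : ℂ) * lkernel (w z) u₁ + (1 - (lam : ℂ)) * lkernel (w z) u₂))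
      (fun m => -(c m) - 2 * ∑ s ∈ Finset.Icc 1 K, co s * powC c (s + 1) m
        - 2 * ∑ i ∈ Finset.range (m + 1), powC c (K + 2) i * d (m - i)) := by
    refine hGrep.congr ?_
    filter_upwards [isOpen_ball.mem_nhds hball] with z hz
    have hbz : ‖w z‖ < 1 := hbd z hz
    have k1 := kernel_expand K u₁ hbz
    have k2 := kernel_expand K u₂ hbz
    have hS : ∑ s ∈ Finset.Icc 1 K, co s * (w z) ^ (s + 1)
        = (lam : ℂ) * ∑ s ∈ Finset.Icc 1 K,
            Complex.exp (-(s : ℂ) * (u₁ : ℂ) * Complex.I) * (w z) ^ (s + 1)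
          + (1 - (lam : ℂ)) * ∑ s ∈ Finset.Icc 1 K,
            Complex.exp (-(s : ℂ) * (u₂ : ℂ) * Complex.I) * (w z) ^ (s + 1) := by
      rw [Finset.mul_sum, Finset.mul_sum, ← Finset.sum_add_distrib]
      exact Finset.sum_congr rfl fun s _ => by rw [hco]; ring
    rw [hH]
    linear_combination (lam : ℂ) * k1 + (1 - (lam : ℂ)) * k2 + 2 * hS
  -- compute the coefficient
  rw [hFrep.taylorCoeff_eq' (K + 1)]
  have hvanish : ∑ i ∈ Finset.range (K + 1 + 1), powC c (K + 2) i * d (K + 1 - i) = 0 :=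
    Finset.sum_eq_zero fun i hi =>
      by rw [powC_vanish hc0 (K + 2) i (by have := Finset.mem_range.1 hi; omega), zero_mul]
  rw [hvanish, mul_zero, sub_zero, hca k]
  congr 1
  rw [Finset.mul_sum, Finset.mul_sum]
  refine Finset.sum_congr rfl fun s _ => ?_
  rw [powC_toeplitz a c hc0 hca s k, hco]
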